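/- In the skew-product setting, the subgroup P of X generated by G together with σ^k is a normal subgroup of X, and P has order p^(n+m); in particular P is a normal Sylow p-subgroup of X. -/

import Mathlib

open scoped commutatorElement

namespace SkewAux

variable {X : Type*} [Group X]

/-- The set of commutators `⁅a,b⁆` with `a ∈ G`, `b ∈ ⟨σ⟩`. -/
def itoS (G : Subgroup X) (σ : X) : Set X :=
  {z | ∃ a ∈ G, ∃ b ∈ Subgroup.zpowers σ, z = ⁅a, b⁆}

theorem ito_conj_A {G : Subgroup X} (hGcomm : ∀ a ∈ G, ∀ b ∈ G, a * b = b * a)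
    {a x b b₂ a₂ : X} (ha : a ∈ G) (hx : x ∈ G) (ha₂ : a₂ ∈ G)
    (hd : x * b * x⁻¹ = b₂ * a₂) :
    x * ⁅a, b⁆ * x⁻¹ = ⁅a, b₂⁆ := by
  have h1 : x * ⁅a, b⁆ * x⁻¹
      = (x * a * x⁻¹) * (x * b * x⁻¹) * (x * a * x⁻¹)⁻¹ * (x * b * x⁻¹)⁻¹ := by
    rw [commutatorElement_def]; group
  have hax : x * a * x⁻¹ = a := by rw [hGcomm x hx a ha]; group
  rw [h1, hax, hd]
  have haa₂ : a₂ * a⁻¹ = a⁻¹ * a₂ := by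
    have h := hGcomm a ha a₂ ha₂
    calc a₂ * a⁻¹ = a⁻¹ * (a * a₂) * a⁻¹ := by group
    _ = a⁻¹ * (a₂ * a) * a⁻¹ := by rw [h]
    _ = a⁻¹ * a₂ := by group
  calc a * (b₂ * a₂) * a⁻¹ * (b₂ * a₂)⁻¹
      = a * b₂ * (a₂ * a⁻¹) * a₂⁻¹ * b₂⁻¹ := by group
    _ = a * b₂ * (a⁻¹ * a₂) * a₂⁻¹ * b₂⁻¹ := by rw [haa₂]
    _ = ⁅a, b₂⁆ := by rw [commutatorElement_def]; group

theorem ito_conj_B {σ : X} {a b y a₁ b₁ : X}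
    (hb : b ∈ Subgroup.zpowers σ) (hy : y ∈ Subgroup.zpowers σ)
    (hb₁ : b₁ ∈ Subgroup.zpowers σ)
    (hd : y * a * y⁻¹ = a₁ * b₁) :
    y * ⁅a, b⁆ * y⁻¹ = ⁅a₁, b⁆ := by
  obtain ⟨i, rfl⟩ := hb
  obtain ⟨j, rfl⟩ := hy
  obtain ⟨l, rfl⟩ := hb₁
  have h1 : σ ^ j * ⁅a, σ ^ i⁆ * (σ ^ j)⁻¹
      = (σ ^ j * a * (σ ^ j)⁻¹) * (σ ^ j * σ ^ i * (σ ^ j)⁻¹)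
        * (σ ^ j * a * (σ ^ j)⁻¹)⁻¹ * (σ ^ j * σ ^ i * (σ ^ j)⁻¹)⁻¹ := by
    rw [commutatorElement_def]; group
  have hby : σ ^ j * σ ^ i * (σ ^ j)⁻¹ = σ ^ i := by
    rw [zpow_mul_comm]; group
  rw [h1, hby, hd]
  have hbb : σ ^ l * σ ^ i = σ ^ i * σ ^ l := zpow_mul_comm σ l i
  calc (a₁ * σ ^ l) * σ ^ i * (a₁ * σ ^ l)⁻¹ * (σ ^ i)⁻¹
      = a₁ * (σ ^ l * σ ^ i) * (σ ^ l)⁻¹ * a₁⁻¹ * (σ ^ i)⁻¹ := by group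
    _ = a₁ * (σ ^ i * σ ^ l) * (σ ^ l)⁻¹ * a₁⁻¹ * (σ ^ i)⁻¹ := by rw [hbb]
    _ = ⁅a₁, σ ^ i⁆ := by rw [commutatorElement_def]; group


section

variable {G : Subgroup X} {σ : X}
  (hGcomm : ∀ a ∈ G, ∀ b ∈ G, a * b = b * a)
  (hAB : ∀ x : X, ∃ a ∈ G, ∃ b ∈ Subgroup.zpowers σ, x = a * b)

include hAB in
theorem decompBA : ∀ x : X, ∃ b ∈ Subgroup.zpowers σ, ∃ a ∈ G, x = b * a := by
  intro x
  obtain ⟨a, ha, b, hb, hx⟩ := hAB x⁻¹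
  exact ⟨b⁻¹, inv_mem hb, a⁻¹, inv_mem ha, by rw [← mul_inv_rev, ← hx, inv_inv]⟩

include hGcomm hAB in
theorem ito_S_conj : ∀ s ∈ itoS G σ, ∀ g : X, g * s * g⁻¹ ∈ itoS G σ := by
  rintro s ⟨a, ha, b, hb, rfl⟩ g
  obtain ⟨x, hx, y, hy, rfl⟩ := hAB g
  obtain ⟨a₁, ha₁, b₁, hb₁, hd₁⟩ := hAB (y * a * y⁻¹)
  obtain ⟨b₂, hb₂, a₂, ha₂, hd₂⟩ := decompBA hAB (x * b * x⁻¹)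
  have h1 : (x * y) * ⁅a, b⁆ * (x * y)⁻¹ = x * (y * ⁅a, b⁆ * y⁻¹) * x⁻¹ := by group
  rw [h1, ito_conj_B hb hy hb₁ hd₁, ito_conj_A hGcomm ha₁ hx ha₂ hd₂]
  exact ⟨a₁, ha₁, b₂, hb₂, rfl⟩

include hGcomm hAB in
theorem ito_key {a b : X} (ha : a ∈ G) (hb : b ∈ Subgroup.zpowers σ)
    {x y : X} (hx : x ∈ G) (hy : y ∈ Subgroup.zpowers σ) :
    (x * y) * ⁅a, b⁆ * (x * y)⁻¹ = (y * x) * ⁅a, b⁆ * (y * x)⁻¹ := by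
  obtain ⟨a₁, ha₁, b₁, hb₁, hd₁⟩ := hAB (y * a * y⁻¹)
  obtain ⟨b₂, hb₂, a₂, ha₂, hd₂⟩ := decompBA hAB (x * b * x⁻¹)
  have h1 : (x * y) * ⁅a, b⁆ * (x * y)⁻¹ = x * (y * ⁅a, b⁆ * y⁻¹) * x⁻¹ := by group
  have h2 : (y * x) * ⁅a, b⁆ * (y * x)⁻¹ = y * (x * ⁅a, b⁆ * x⁻¹) * y⁻¹ := by group
  rw [h1, h2, ito_conj_B hb hy hb₁ hd₁, ito_conj_A hGcomm ha hx ha₂ hd₂,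
    ito_conj_A hGcomm ha₁ hx ha₂ hd₂, ito_conj_B hb₂ hy hb₁ hd₁]

include hGcomm hAB in
theorem ito_commute_S : ∀ s ∈ itoS G σ, ∀ t ∈ itoS G σ, Commute s t := by
  rintro s ⟨a, ha, b, hb, rfl⟩ t ht
  obtain ⟨a', ha', b', hb', rfl⟩ := ht
  have hkey := ito_key hGcomm hAB ha' hb' (inv_mem ha) (inv_mem hb)
  -- hkey : (a⁻¹ * b⁻¹) * ⁅a',b'⁆ * (a⁻¹*b⁻¹)⁻¹ = (b⁻¹ * a⁻¹) * ⁅a',b'⁆ * (b⁻¹*a⁻¹)⁻¹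
  have h2 : ⁅a, b⁆ * ⁅a', b'⁆ * ⁅a, b⁆⁻¹
      = (b⁻¹ * a⁻¹)⁻¹ * ((a⁻¹ * b⁻¹) * ⁅a', b'⁆ * (a⁻¹ * b⁻¹)⁻¹) * (b⁻¹ * a⁻¹) := by
    rw [commutatorElement_def]; group
  have h3 : ⁅a, b⁆ * ⁅a', b'⁆ * ⁅a, b⁆⁻¹ = ⁅a', b'⁆ := by
    rw [h2, hkey]; group
  exact mul_inv_eq_iff_eq_mul.mp h3


include hGcomm hAB in
theorem ito_N_comm0 : ∀ u ∈ Subgroup.closure (itoS G σ), ∀ v ∈ Subgroup.closure (itoS G σ),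
    Commute u v := by
  intro u hu v hv
  induction hu, hv using Subgroup.closure_induction₂ with
  | mem x y hx hy => exact ito_commute_S hGcomm hAB x hx y hy
  | one_left x hx => exact Commute.one_left x
  | one_right x hx => exact Commute.one_right x
  | mul_left x y z hx hy hz h1 h2 => exact h1.mul_left h2
  | mul_right y z x hy hz hx h1 h2 => exact h1.mul_right h2
  | inv_left x y hx hy h => exact h.inv_left
  | inv_right x y hx hy h => exact h.inv_right

include hGcomm hAB in
theorem ito_N_normal0 : (Subgroup.closure (itoS G σ)).Normal := by
  constructor
  intro n hn g
  induction hn using Subgroup.closure_induction with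
  | mem x hx => exact Subgroup.subset_closure (ito_S_conj hGcomm hAB x hx g)
  | one => simpa using Subgroup.one_mem _
  | mul x y hx hy ihx ihy =>
    have h : g * (x * y) * g⁻¹ = (g * x * g⁻¹) * (g * y * g⁻¹) := by group
    rw [h]; exact mul_mem ihx ihy
  | inv x hx ihx =>
    have h : g * x⁻¹ * g⁻¹ = (g * x * g⁻¹)⁻¹ := by group
    rw [h]; exact inv_mem ihx

include hGcomm hAB in
theorem ito_commutator_mem0 : ∀ u v : X, ⁅u, v⁆ ∈ Subgroup.closure (itoS G σ) := by
  have hnormal := ito_N_normal0 hGcomm hAB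
  have memS : ∀ a ∈ G, ∀ b ∈ Subgroup.zpowers σ, ⁅a, b⁆ ∈ Subgroup.closure (itoS G σ) :=
    fun a ha b hb => Subgroup.subset_closure ⟨a, ha, b, hb, rfl⟩
  have memS' : ∀ a ∈ G, ∀ b ∈ Subgroup.zpowers σ, ⁅b, a⁆ ∈ Subgroup.closure (itoS G σ) := by
    intro a ha b hb
    rw [← commutatorElement_inv]
    exact inv_mem (memS a ha b hb)
  intro u v
  obtain ⟨x₁, hx₁, y₁, hy₁, rfl⟩ := hAB u
  obtain ⟨x₂, hx₂, y₂, hy₂, rfl⟩ := hAB v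
  have split1 : ⁅x₁ * y₁, x₂ * y₂⁆
      = (x₁ * ⁅y₁, x₂ * y₂⁆ * x₁⁻¹) * ⁅x₁, x₂ * y₂⁆ := by
    rw [commutatorElement_def, commutatorElement_def, commutatorElement_def]; group
  have split2 : ⁅y₁, x₂ * y₂⁆ = ⁅y₁, x₂⁆ * (x₂ * ⁅y₁, y₂⁆ * x₂⁻¹) := by
    rw [commutatorElement_def, commutatorElement_def, commutatorElement_def]; group
  have split3 : ⁅x₁, x₂ * y₂⁆ = ⁅x₁, x₂⁆ * (x₂ * ⁅x₁, y₂⁆ * x₂⁻¹) := by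
    rw [commutatorElement_def, commutatorElement_def, commutatorElement_def]; group
  have hy₁y₂ : ⁅y₁, y₂⁆ = 1 := by
    obtain ⟨i, rfl⟩ := hy₁; obtain ⟨j, rfl⟩ := hy₂
    exact commutatorElement_eq_one_iff_commute.mpr (zpow_mul_comm σ i j)
  have hx₁x₂ : ⁅x₁, x₂⁆ = 1 :=
    commutatorElement_eq_one_iff_commute.mpr (hGcomm x₁ hx₁ x₂ hx₂)
  rw [split1, split2, split3, hy₁y₂, hx₁x₂]
  refine mul_mem (hnormal.conj_mem _ (mul_mem ?_ ?_) x₁) ?_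
  · exact memS' x₂ hx₂ y₁ hy₁
  · exact hnormal.conj_mem _ (by simpa using Subgroup.one_mem _) x₂
  · simpa using hnormal.conj_mem _ (memS x₁ hx₁ y₂ hy₂) x₂


end

end SkewAux

open SkewAux

/-- In the skew-product setting, the subgroup `P = ⟨G, σ^k⟩` of `X` is normal in `X`
and has order `p^(n+m)`; in particular it is a normal Sylow `p`-subgroup of `X`. -/


theorem skew_product_sylow_normal
    (p : ℕ) (hp : p.Prime) {X : Type*} [Group X] [Finite X]
    (G : Subgroup X) (n : ℕ) (hn : 1 ≤ n)
    (hGcard : Nat.card G = p ^ n)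
    (hGcomm : ∀ a ∈ G, ∀ b ∈ G, a * b = b * a)
    (hGexp : ∀ g ∈ G, g ^ p = 1)
    (σ : X) (k m : ℕ) (hk : 1 ≤ k) (hpk : ¬ p ∣ k)
    (hord : orderOf σ = k * p ^ m)
    (hfact : ∀ x : X, ∃ g ∈ G, ∃ i : ℤ, x = g * σ ^ i)
    (hinter : G ⊓ Subgroup.zpowers σ = ⊥)
    (hcorefree : ∀ N : Subgroup X, N.Normal → N ≤ Subgroup.zpowers σ → N = ⊥) :
    (G ⊔ Subgroup.zpowers (σ ^ k)).Normal ∧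
      Nat.card (G ⊔ Subgroup.zpowers (σ ^ k) : Subgroup X) = p ^ (n + m) := by
  haveI : Fact p.Prime := ⟨hp⟩
  set C := Subgroup.zpowers σ with hC
  -- decomposition
  have hAB : ∀ x : X, ∃ a ∈ G, ∃ b ∈ C, x = a * b := by
    intro x
    obtain ⟨g, hg, i, hx⟩ := hfact x
    exact ⟨g, hg, σ ^ i, Subgroup.zpow_mem C (Subgroup.mem_zpowers σ) i, hx⟩
  have hcardC : Nat.card C = k * p ^ m := by rw [hC, Nat.card_zpowers, hord]
  -- unique decomposition
  have hinj0 : ∀ (g g' s s' : X), g ∈ G → g' ∈ G → s ∈ C → s' ∈ C →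
      g * s = g' * s' → g = g' := by
    intro g g' s s' hg hg' hs hs' hEq
    have h1 : g'⁻¹ * g = s' * s⁻¹ := by
      have : g'⁻¹ * (g * s) * s⁻¹ = g'⁻¹ * (g' * s') * s⁻¹ := by rw [hEq]
      calc g'⁻¹ * g = g'⁻¹ * (g * s) * s⁻¹ := by group
        _ = g'⁻¹ * (g' * s') * s⁻¹ := this
        _ = s' * s⁻¹ := by group
    have hmem : g'⁻¹ * g ∈ G ⊓ C := by
      refine Subgroup.mem_inf.mpr ⟨mul_mem (inv_mem hg') hg, ?_⟩
      rw [h1]; exact mul_mem hs' (inv_mem hs)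
    rw [hinter] at hmem
    exact (inv_mul_eq_one.mp hmem).symm
  -- card X = p^n * (k * p^m)
  have hcardX : Nat.card X = p ^ n * (k * p ^ m) := by
    have hbij : Function.Bijective (fun gs : G × C => (gs.1 : X) * (gs.2 : X)) := by
      constructor
      · rintro ⟨g, s⟩ ⟨g', s'⟩ hEq
        have hEq' : (g : X) * s = (g' : X) * s' := hEq
        have hgg : (g : X) = g' := hinj0 g g' s s' g.2 g'.2 s.2 s'.2 hEq'
        have hss : (s : X) = s' := by
          apply mul_left_cancel (a := (g : X))
          rw [hEq', hgg]
        exact Prod.ext (Subtype.ext hgg) (Subtype.ext hss)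
      · intro x
        obtain ⟨a, ha, b, hb, hx⟩ := hAB x
        exact ⟨(⟨a, ha⟩, ⟨b, hb⟩), hx.symm⟩
    calc Nat.card X = Nat.card (G × C) := (Nat.card_congr (Equiv.ofBijective _ hbij)).symm
      _ = Nat.card G * Nat.card C := Nat.card_prod _ _
      _ = p ^ n * (k * p ^ m) := by rw [hGcard, hcardC]
  -- the Ito subgroup
  set N := Subgroup.closure (itoS G σ) with hN
  haveI hNnormal : N.Normal := ito_N_normal0 hGcomm hAB
  have hNcomm := ito_N_comm0 hGcomm hAB
  have hNcomms := ito_commutator_mem0 hGcomm hAB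
  -- the p'-part of N
  set Np : Subgroup X := {
    carrier := {x | x ∈ N ∧ (orderOf x).Coprime p}
    one_mem' := ⟨one_mem N, by rw [orderOf_one]; exact Nat.coprime_one_left p⟩
    mul_mem' := by
      rintro x y ⟨hxN, hxo⟩ ⟨hyN, hyo⟩
      refine ⟨mul_mem hxN hyN, Nat.Coprime.coprime_dvd_left ?_ (hxo.mul hyo)⟩
      exact (hNcomm x hxN y hyN).orderOf_mul_dvd_mul_orderOf
    inv_mem' := by
      rintro x ⟨hxN, hxo⟩
      exact ⟨inv_mem hxN, by rwa [orderOf_inv]⟩ } with hNp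
  have hNpmem : ∀ x : X, x ∈ Np ↔ x ∈ N ∧ (orderOf x).Coprime p := fun x => Iff.rfl
  haveI hNpnormal : Np.Normal := by
    constructor
    intro x hx g
    obtain ⟨hxN, hxo⟩ := (hNpmem x).mp hx
    refine (hNpmem _).mpr ⟨hNnormal.conj_mem x hxN g, ?_⟩
    have h1 : orderOf (g * x * g⁻¹) = orderOf x :=
      orderOf_injective (MulAut.conj g).toMonoidHom (MulAut.conj g).injective x
    rwa [h1]
  -- p does not divide card Np
  have hNpcop : (Nat.card Np).Coprime p := by
    rw [Nat.coprime_comm]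
    refine (hp.coprime_iff_not_dvd).mpr ?_
    intro hdvd
    haveI : Fintype ↥Np := Fintype.ofFinite _
    rw [Nat.card_eq_fintype_card] at hdvd
    obtain ⟨x, hx⟩ := exists_prime_orderOf_dvd_card p hdvd
    have hco : (orderOf (x : X)).Coprime p := x.2.2
    rw [Subgroup.orderOf_coe, hx] at hco
    exact hp.one_lt.ne' ((Nat.coprime_self p).mp hco)
  -- second isomorphism argument: Np ≤ C
  have hNpleC : Np ≤ C := by
    set Y := C ⊔ Np with hY
    have e2 := QuotientGroup.quotientInfEquivProdNormalQuotient C Np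
    have hq1 : Nat.card (C ⧸ Np.subgroupOf C) = Nat.card (Y ⧸ Np.subgroupOf Y) :=
      Nat.card_congr e2.toEquiv
    have hInfCard : Nat.card (Np.subgroupOf C) = Nat.card (Np ⊓ C : Subgroup X) := by
      rw [← Subgroup.inf_subgroupOf_right]
      exact Nat.card_congr (Subgroup.subgroupOfEquivOfLe inf_le_right).toEquiv
    have hNpYCard : Nat.card (Np.subgroupOf Y) = Nat.card Np :=
      Nat.card_congr (Subgroup.subgroupOfEquivOfLe le_sup_right).toEquiv
    have hCeq : Nat.card C = Nat.card (C ⧸ Np.subgroupOf C) * Nat.card (Np ⊓ C : Subgroup X) := by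
      rw [← hInfCard]; exact Subgroup.card_eq_card_quotient_mul_card_subgroup _
    have hYeq : Nat.card Y = Nat.card (C ⧸ Np.subgroupOf C) * Nat.card Np := by
      rw [hq1, ← hNpYCard]; exact Subgroup.card_eq_card_quotient_mul_card_subgroup _
    set q1 := Nat.card (C ⧸ Np.subgroupOf C) with hq1def
    have hq1pos : 0 < q1 := Nat.card_pos
    -- Lagrange : card Y ∣ card X
    have hYdvd : Nat.card Y ∣ Nat.card X := Subgroup.card_subgroup_dvd_card Y
    rw [hcardX, hYeq] at hYdvd
    have hXeq : p ^ n * (k * p ^ m) = q1 * (p ^ n * Nat.card (Np ⊓ C : Subgroup X)) := by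
      rw [← hcardC, hCeq]; ring
    rw [hXeq] at hYdvd
    have hdvd2 : Nat.card Np ∣ p ^ n * Nat.card (Np ⊓ C : Subgroup X) :=
      (Nat.mul_dvd_mul_iff_left hq1pos).mp hYdvd
    have hInfDvd : Nat.card (Np ⊓ C : Subgroup X) ∣ Nat.card Np :=
      Subgroup.card_dvd_of_le inf_le_left
    obtain ⟨s, hs⟩ := hInfDvd
    have hInfPos : 0 < Nat.card (Np ⊓ C : Subgroup X) := Nat.card_pos
    have hsdvd : s ∣ p ^ n := by
      have : Nat.card (Np ⊓ C : Subgroup X) * s ∣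
          Nat.card (Np ⊓ C : Subgroup X) * p ^ n := by
        rw [← hs]; rw [mul_comm (p ^ n) _] at hdvd2; exact hdvd2
      exact (Nat.mul_dvd_mul_iff_left hInfPos).mp this
    have hscop : s.Coprime p := Nat.Coprime.coprime_dvd_left ⟨_, by rw [hs, mul_comm]⟩ hNpcop
    have hs1 : s = 1 := (hscop.pow_right n).eq_one_of_dvd hsdvd
    have hcardeq : Nat.card Np = Nat.card (Np ⊓ C : Subgroup X) := by rw [hs, hs1, mul_one]
    have : Np ⊓ C = Np := Subgroup.eq_of_le_of_card_ge inf_le_left (le_of_eq hcardeq)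
    rw [← this]; exact inf_le_right
  -- hence Np is trivial and N is a p-group
  have hNpbot : Np = ⊥ := hcorefree Np hNpnormal hNpleC
  have hNpGroup : IsPGroup p ↥N := by
    intro g
    set o := orderOf (g : X) with ho
    have hopos : o ≠ 0 := (orderOf_pos (g : X)).ne'
    refine ⟨o.factorization p, ?_⟩
    have hmem : (g : X) ^ p ^ o.factorization p ∈ Np := by
      refine (hNpmem _).mpr ⟨pow_mem g.2 _, ?_⟩
      have h1 : orderOf ((g : X) ^ p ^ o.factorization p) = ordCompl[p] o := by
        rw [orderOf_pow (g : X), ← ho, Nat.gcd_eq_right (Nat.ordProj_dvd o p)]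
      rw [h1]
      exact (Nat.coprime_ordCompl hp hopos).symm
    rw [hNpbot, Subgroup.mem_bot] at hmem
    ext
    rw [Subgroup.coe_pow, hmem, OneMemClass.coe_one]
  -- quotient and torsion
  set π := QuotientGroup.mk' N with hπ
  have hQcomm : ∀ u v : X ⧸ N, Commute u v := by
    intro u v
    obtain ⟨x, rfl⟩ := QuotientGroup.mk'_surjective N u
    obtain ⟨y, rfl⟩ := QuotientGroup.mk'_surjective N v
    show π x * π y = π y * π x
    rw [← map_mul, ← map_mul]
    apply (QuotientGroup.eq (s := N)).mpr
    have h1 : (x * y)⁻¹ * (y * x) = ⁅y⁻¹, x⁻¹⁆ := by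
      rw [commutatorElement_def]; group
    rw [h1]; exact hNcomms y⁻¹ x⁻¹
  set TQ : Subgroup (X ⧸ N) := {
    carrier := {q | ∃ j : ℕ, q ^ p ^ j = 1}
    one_mem' := ⟨0, one_pow _⟩
    mul_mem' := by
      rintro u v ⟨i, hi⟩ ⟨j, hj⟩
      refine ⟨i + j, ?_⟩
      rw [(hQcomm u v).mul_pow, pow_add, pow_mul, hi, one_pow, one_mul, mul_comm (p^i) (p^j),
        pow_mul, hj, one_pow]
    inv_mem' := by
      rintro u ⟨i, hi⟩
      exact ⟨i, by rw [inv_pow, hi, inv_one]⟩ } with hTQ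
  have hTQnormal : TQ.Normal := by
    constructor
    rintro q ⟨j, hj⟩ g
    exact ⟨j, by rw [conj_pow, hj, mul_one, mul_inv_cancel]⟩
  set P₀ := TQ.comap π with hP₀
  haveI hP₀normal : P₀.Normal := hTQnormal.comap π
  -- P₀ is a p-group
  have hP₀p : IsPGroup p ↥P₀ := by
    intro g
    obtain ⟨j, hj⟩ := g.2
    have hmemN : (g : X) ^ p ^ j ∈ N := by
      have hone : π ((g : X) ^ p ^ j) = 1 := by rw [map_pow]; exact hj
      rw [← QuotientGroup.ker_mk' N]
      exact hone
    obtain ⟨i, hi⟩ := hNpGroup ⟨(g : X) ^ p ^ j, hmemN⟩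
    refine ⟨j + i, ?_⟩
    have hival : ((g : X) ^ p ^ j) ^ p ^ i = 1 := congrArg Subtype.val hi
    ext
    rw [Subgroup.coe_pow, pow_add, pow_mul, hival, OneMemClass.coe_one]
  -- G and σ^k lie in P₀
  have hGP₀ : G ≤ P₀ := by
    intro g hg
    refine ⟨1, ?_⟩
    rw [pow_one, ← map_pow, hGexp g hg, map_one]
  have hσkP₀ : σ ^ k ∈ P₀ := by
    refine ⟨m, ?_⟩
    rw [← map_pow, ← pow_mul, ← hord, pow_orderOf_eq_one, map_one]
  have hJP₀ : G ⊔ Subgroup.zpowers (σ ^ k) ≤ P₀ :=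
    sup_le hGP₀ (Subgroup.zpowers_le.mpr hσkP₀)
  -- order of σ^k
  have hordσk : orderOf (σ ^ k) = p ^ m := by
    rw [orderOf_pow σ, hord, Nat.gcd_eq_right ⟨p ^ m, rfl⟩, Nat.mul_div_cancel_left _ hk]
  -- lower bound on card J
  have hJge : p ^ (n + m) ≤ Nat.card (G ⊔ Subgroup.zpowers (σ ^ k) : Subgroup X) := by
    set J := G ⊔ Subgroup.zpowers (σ ^ k) with hJ
    have hσkC : Subgroup.zpowers (σ ^ k) ≤ C :=
      Subgroup.zpowers_le.mpr (Subgroup.pow_mem C (Subgroup.mem_zpowers σ) k)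
    set f : G × Subgroup.zpowers (σ ^ k) → ↥J := fun gs =>
      ⟨(gs.1 : X) * (gs.2 : X),
        mul_mem (Subgroup.mem_sup_left gs.1.2) (Subgroup.mem_sup_right gs.2.2)⟩ with hf
    have hfinj : Function.Injective f := by
      rintro ⟨g, s⟩ ⟨g', s'⟩ hEq
      have hEq' : (g : X) * s = (g' : X) * s' := congrArg Subtype.val hEq
      have hgg : (g : X) = g' := hinj0 g g' s s' g.2 g'.2 (hσkC s.2) (hσkC s'.2) hEq'
      have hss : (s : X) = s' := by
        apply mul_left_cancel (a := (g : X))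
        rw [hEq', hgg]
      exact Prod.ext (Subtype.ext hgg) (Subtype.ext hss)
    calc p ^ (n + m) = Nat.card (G × Subgroup.zpowers (σ ^ k)) := by
          rw [Nat.card_prod, hGcard, Nat.card_zpowers, hordσk, pow_add]
      _ ≤ Nat.card ↥J := Nat.card_le_card_of_injective f hfinj
  -- upper bound on card P₀
  obtain ⟨w, hw⟩ := (IsPGroup.iff_card (p := p) (G := ↥P₀)).mp hP₀p
  have hP₀le : Nat.card P₀ ≤ p ^ (n + m) := by
    have hdvd : Nat.card P₀ ∣ Nat.card X := Subgroup.card_subgroup_dvd_card P₀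
    rw [hcardX, hw] at hdvd
    have h1 : p ^ n * (k * p ^ m) = p ^ (n + m) * k := by ring
    rw [h1] at hdvd
    have hcopk : (p ^ w).Coprime k := (hp.coprime_iff_not_dvd.mpr hpk).pow_left w
    have : p ^ w ∣ p ^ (n + m) := (Nat.Coprime.dvd_of_dvd_mul_right hcopk) hdvd
    rw [hw]
    exact Nat.le_of_dvd (pow_pos hp.pos _) this
  have hJle : Nat.card (G ⊔ Subgroup.zpowers (σ ^ k) : Subgroup X) ≤ Nat.card P₀ :=
    Subgroup.card_le_of_le hJP₀
  have hcardJ : Nat.card (G ⊔ Subgroup.zpowers (σ ^ k) : Subgroup X) = p ^ (n + m) :=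
    le_antisymm (hJle.trans hP₀le) hJge
  have hJeq : G ⊔ Subgroup.zpowers (σ ^ k) = P₀ :=
    Subgroup.eq_of_le_of_card_ge hJP₀ (hP₀le.trans (le_of_eq hcardJ.symm))
  exact ⟨hJeq ▸ hP₀normal, hcardJ⟩
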